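/- There exists an arithmetical structure on K_27 whose maximum value is the prime 181, but there is no arithmetical structure on K_27 whose maximum value is the prime 179. -/

import Mathlib

/-- An arithmetical structure on `K n`. -/
def IsArithStruct (n : ℕ) (r : Fin n → ℕ) : Prop :=
  (∀ i, 0 < r i) ∧ Finset.univ.gcd r = 1 ∧ ∀ j, r j ∣ ∑ i, r i

theorem stmt_19 :
    (∃ r : Fin 27 → ℕ, IsArithStruct 27 r ∧ (∀ i, r i ≤ 181) ∧ (∃ i, r i = 181)) ∧
    ¬ (∃ r : Fin 27 → ℕ, IsArithStruct 27 r ∧ (∀ i, r i ≤ 179) ∧ (∃ i, r i = 179)) := by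
  constructor
  · -- eleven 181's, fifteen 12's, one 1 : sum = 2172 = 181 * 12
    refine ⟨fun i => if i.val < 11 then 181 else if i.val < 26 then 12 else 1,
      ⟨?_, ?_, ?_⟩, ?_, ⟨0, by decide⟩⟩ <;> decide
  · rintro ⟨r, ⟨hpos, hgcd, hdvd⟩, hle, i0, h179⟩
    have hp : Nat.Prime 179 := by norm_num
    obtain ⟨b, hb⟩ : (179:ℕ) ∣ ∑ i, r i := h179 ▸ hdvd i0
    have hbpos : 0 < b := by
      rcases Nat.eq_zero_or_pos b with h | h
      · exfalso
        have := Finset.sum_pos (fun i _ => hpos i) ⟨i0, Finset.mem_univ i0⟩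
        omega
      · exact h
    have key : ∀ j, r j = 179 ∨ r j ∣ b := by
      intro j
      by_cases h : (179:ℕ) ∣ r j
      · exact Or.inl (le_antisymm (hle j) (Nat.le_of_dvd (hpos j) h))
      · refine Or.inr ?_
        have hco : Nat.Coprime 179 (r j) := (Nat.Prime.coprime_iff_not_dvd hp).mpr h
        exact (Nat.Coprime.dvd_of_dvd_mul_left hco.symm (hb ▸ hdvd j))
    set M : Finset (Fin 27) := Finset.univ.filter (fun j => r j = 179) with hM
    set C : Finset (Fin 27) := Finset.univ.filter (fun j => r j ≠ 179) with hC
    have hsplit : ∑ j ∈ M, r j + ∑ j ∈ C, r j = ∑ i, r i := by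
      rw [hM, hC, Finset.sum_filter_add_sum_filter_not]
    have hcard : M.card + C.card = 27 := by
      have := Finset.card_filter_add_card_filter_not (s := Finset.univ)
        (p := fun j => r j = 179)
      simpa using this
    have hMsum : ∑ j ∈ M, r j = 179 * M.card := by
      rw [Finset.sum_congr rfl (fun j hj => (Finset.mem_filter.mp hj).2)]
      simp [mul_comm, hM]
    have hm1 : 1 ≤ M.card :=
      Finset.card_pos.mpr ⟨i0, Finset.mem_filter.mpr ⟨Finset.mem_univ _, h179⟩⟩
    have hc1 : 1 ≤ C.card := by
      rcases Finset.eq_empty_or_nonempty C with h | h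
      · exfalso
        have hall : ∀ j : Fin 27, r j = 179 := by
          intro j
          by_contra hne
          exact (Finset.eq_empty_iff_forall_notMem.mp h j)
            (Finset.mem_filter.mpr ⟨Finset.mem_univ _, hne⟩)
        have : (179:ℕ) ∣ Finset.univ.gcd r := Finset.dvd_gcd (fun j _ => (hall j) ▸ dvd_refl _)
        rw [hgcd] at this
        exact absurd (Nat.eq_one_of_dvd_one this) (by norm_num)
      · exact Finset.card_pos.mpr h
    have hCdvd : ∀ j ∈ C, r j ∣ b := by
      intro j hj
      rcases key j with h | h
      · exact absurd h (Finset.mem_filter.mp hj).2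
      · exact h
    have hTub : ∑ j ∈ C, r j ≤ C.card * b :=
      Finset.sum_le_card_nsmul C r b (fun j hj => Nat.le_of_dvd hbpos (hCdvd j hj))
    have hTlb : C.card ≤ ∑ j ∈ C, r j :=
      Finset.card_nsmul_le_sum C r 1 (fun j hj => hpos j) |>.trans_eq' (by simp)
    have hfib : ∑ d ∈ b.divisors, ∑ j ∈ C.filter (fun j => r j = d), r j = ∑ j ∈ C, r j := by
      apply Finset.sum_fiberwise_of_maps_to
      intro j hj
      exact Nat.mem_divisors.mpr ⟨hCdvd j hj, by omega⟩
    have hfib2 : ∑ d ∈ b.divisors, (C.filter (fun j => r j = d)).card = C.card := by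
      have := Finset.sum_fiberwise_of_maps_to (g := r) (t := b.divisors) (f := fun _ => (1:ℕ))
        (fun j hj => Nat.mem_divisors.mpr ⟨hCdvd j hj, by omega⟩)
      simpa using this
    have hfib' : ∑ d ∈ b.divisors, d * (C.filter (fun j => r j = d)).card = ∑ j ∈ C, r j := by
      rw [← hfib]
      apply Finset.sum_congr rfl
      intro d _
      rw [Finset.sum_congr rfl (fun j hj => (Finset.mem_filter.mp hj).2), Finset.sum_const,
        smul_eq_mul, mul_comm]
    -- linear bookkeeping
    have hsum : 179 * M.card + ∑ j ∈ C, r j = 179 * b := by rw [← hMsum, hsplit, hb]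
    have hm2 : M.card ≤ 26 := by omega
    have hcC : C.card = 27 - M.card := by omega
    rw [hcC] at hTub hTlb hfib2
    have hT26 : ∑ j ∈ C, r j ≤ 26 * b := by
      calc ∑ j ∈ C, r j ≤ (27 - M.card) * b := hTub
        _ ≤ 26 * b := Nat.mul_le_mul_right b (by omega)
    have hbu : b ≤ 30 := by omega
    have hbl : M.card + 1 ≤ b := by omega
    obtain ⟨m, hmeq⟩ : ∃ m, m = M.card := ⟨_, rfl⟩
    rw [← hmeq] at hsum hm1 hm2 hTub hTlb hfib2 hbl
    clear hmeq hcC hMsum hsplit hcard hc1 hM hC hfib hT26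
    interval_cases m <;> interval_cases b <;>
      first
        | omega
        | (first
            | rw [show (10:ℕ).divisors = ({1,2,5,10} : Finset ℕ) from by decide] at hfib' hfib2
            | rw [show (11:ℕ).divisors = ({1,11} : Finset ℕ) from by decide] at hfib' hfib2
            | rw [show (12:ℕ).divisors = ({1,2,3,4,6,12} : Finset ℕ) from by decide] at hfib' hfib2
            | rw [show (13:ℕ).divisors = ({1,13} : Finset ℕ) from by decide] at hfib' hfib2
            | rw [show (14:ℕ).divisors = ({1,2,7,14} : Finset ℕ) from by decide] at hfib' hfib2
            | rw [show (15:ℕ).divisors = ({1,3,5,15} : Finset ℕ) from by decide] at hfib' hfib2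
            | rw [show (16:ℕ).divisors = ({1,2,4,8,16} : Finset ℕ) from by decide] at hfib' hfib2
            | rw [show (17:ℕ).divisors = ({1,17} : Finset ℕ) from by decide] at hfib' hfib2
            | rw [show (18:ℕ).divisors = ({1,2,3,6,9,18} : Finset ℕ) from by decide] at hfib' hfib2) <;>
          (repeat rw [Finset.sum_insert (by decide)] at hfib' hfib2) <;>
          rw [Finset.sum_singleton] at hfib' hfib2 <;>
          first
            | omega
            | (obtain ⟨a, ha⟩ : ∃ a, (C.filter (fun j => r j = 7)).card = a := ⟨_, rfl⟩
               have ha27 : a ≤ 27 := ha ▸ le_trans (Finset.card_filter_le _ _) (le_trans (Finset.card_le_univ _) (by simp))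
               rw [ha] at hfib' hfib2
               interval_cases a <;> omega)
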